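/- Let 𝔊₂ be the 7-dimensional real Lie algebra with basis (X₁,X₂,X₃,X₄,X₅,X,Y) and nonzero brackets [X₁,X₂]=X₄, [X₁,X₃]=X₅, [X,X₁]=X₁, [X,X₄]=X₄, [X,X₅]=X₅, [Y,X₃]=X₃, [Y,X₅]=X₅. For every U = x₁X₁+x₂X₂+x₃X₃+x₄X₄+x₅X₅+xX+yY ∈ 𝔊₂ (x₁,...,x₅,x,y ∈ ℝ), the characteristic polynomial of the adjoint endomorphism ad_U : T ↦ [U,T] equals T³·(T−x)²·(T−y)·(T−x−y). In particular, all complex eigenvalues of ad_U are real for every U ∈ 𝔊₂. -/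

import Mathlib

noncomputable section

/-- Half of the structure constants of the Lie algebra 𝔊₂ (indices `0,…,4` are
`X₁,…,X₅`, index `5` is `X`, index `6` is `Y`). -/
def g2half (i j : Fin 7) : Fin 7 → ℝ :=
  if i = 0 ∧ j = 1 then Pi.single 3 1      -- [X₁,X₂] = X₄
  else if i = 0 ∧ j = 2 then Pi.single 4 1 -- [X₁,X₃] = X₅
  else if i = 5 ∧ j = 0 then Pi.single 0 1 -- [X,X₁] = X₁
  else if i = 5 ∧ j = 3 then Pi.single 3 1 -- [X,X₄] = X₄
  else if i = 5 ∧ j = 4 then Pi.single 4 1 -- [X,X₅] = X₅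
  else if i = 6 ∧ j = 2 then Pi.single 2 1 -- [Y,X₃] = X₃
  else if i = 6 ∧ j = 4 then Pi.single 4 1 -- [Y,X₅] = X₅
  else 0

/-- The bracket `[Xᵢ, Xⱼ]` (in coordinates) of basis vectors of 𝔊₂. -/
def g2br (i j : Fin 7) : Fin 7 → ℝ := g2half i j - g2half j i

/-- The matrix (in the given basis) of the adjoint endomorphism `ad_U : T ↦ [U,T]`
of 𝔊₂, where `u` is the coordinate vector of `U`, so `U = ∑ uᵢ Xᵢ + u₅ X + u₆ Y`. -/
def adG2 (u : Fin 7 → ℝ) : Matrix (Fin 7) (Fin 7) ℝ :=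
  Matrix.of fun k j => ∑ i, u i * g2br i j k

/-- A permutation of the basis making `ad_U` lower triangular. -/
def g2perm : Equiv.Perm (Fin 7) where
  toFun := ![1, 5, 6, 0, 2, 3, 4]
  invFun := ![3, 0, 4, 5, 6, 1, 2]
  left_inv := by decide
  right_inv := by decide

lemma g2vec7_5 {α : Type*} (a b c d e f g : α) : ![a, b, c, d, e, f, g] 5 = f := rfl
lemma g2vec7_6 {α : Type*} (a b c d e f g : α) : ![a, b, c, d, e, f, g] 6 = g := rfl

open Polynomial in
set_option maxHeartbeats 4000000 in
lemma charpoly_adG2_eq (u : Fin 7 → ℝ) :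
    (adG2 u).charpoly =
      X ^ 3 * (X - C (u 5)) ^ 2 * (X - C (u 6)) * (X - C (u 5 + u 6)) := by
  have hdet : (adG2 u).charpoly
      = ((Matrix.charmatrix (adG2 u)).submatrix g2perm g2perm).det := by
    rw [Matrix.charpoly, Matrix.det_submatrix_equiv_self]
  rw [hdet, Matrix.det_of_lowerTriangular]
  · rw [Fin.prod_univ_seven]
    simp [Matrix.submatrix_apply, g2perm, Matrix.charmatrix_apply, adG2, g2br, g2half,
      Fin.sum_univ_seven, Pi.single_apply, g2vec7_5, g2vec7_6]
    ring_nf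
    exact Or.inl trivial
  · intro i j hij
    fin_cases i <;> fin_cases j <;>
      first
      | exact absurd hij (by decide)
      | simp [Matrix.submatrix_apply, g2perm, Matrix.charmatrix_apply, adG2, g2br, g2half,
          Fin.sum_univ_seven, Pi.single_apply, g2vec7_5, g2vec7_6]

open Polynomial in
lemma eigen_real_of_charpoly (u : Fin 7 → ℝ) (M : Matrix (Fin 7) (Fin 7) ℝ)
    (h : M.charpoly = X ^ 3 * (X - C (u 5)) ^ 2 * (X - C (u 6)) * (X - C (u 5 + u 6))) :
    ∀ z : ℂ, Module.End.HasEigenvalue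
        (Matrix.toLin' (M.map (fun r : ℝ => (r : ℂ)))) z → z.im = 0 := by
  intro z hz
  set Mc := M.map (fun r : ℝ => (r : ℂ)) with hMc
  have hcp : (Matrix.toLin' Mc).charpoly = Mc.charpoly := by
    rw [← LinearMap.charpoly_toMatrix (Matrix.toLin' Mc) (Pi.basisFun ℂ (Fin 7))]
    refine congrArg Matrix.charpoly ?_
    rw [LinearMap.toMatrix_eq_toMatrix']
    exact LinearMap.toMatrix'_toLin' Mc
  have hroot : (Matrix.toLin' Mc).charpoly.IsRoot z := by
    have h1 := (Module.End.hasEigenvalue_iff_isRoot).mp hz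
    exact h1.dvd ((Matrix.toLin' Mc).minpoly_dvd_charpoly)
  rw [hcp] at hroot
  have hmap : Mc.charpoly = M.charpoly.map Complex.ofRealHom := by
    rw [hMc]
    exact Matrix.charpoly_map M Complex.ofRealHom
  rw [hmap, h] at hroot
  simp only [IsRoot, Polynomial.eval_map, Polynomial.eval₂_mul, Polynomial.eval₂_pow,
    Polynomial.eval₂_sub, Polynomial.eval₂_X, Polynomial.eval₂_C, Complex.ofRealHom_eq_coe,
    Polynomial.eval₂_add] at hroot
  rcases mul_eq_zero.mp hroot with h' | h'
  · rcases mul_eq_zero.mp h' with h'' | h''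
    · rcases mul_eq_zero.mp h'' with h3 | h3
      · have : z = 0 := by
          have := pow_eq_zero_iff (n := 3) (by norm_num) |>.mp h3
          exact this
        simp [this]
      · have : z = (u 5 : ℂ) := by
          have := pow_eq_zero_iff (n := 2) (by norm_num) |>.mp h3
          linear_combination this
        simp [this]
    · have : z = (u 6 : ℂ) := by linear_combination h''
      simp [this]
  · have : z = ((u 5 + u 6 : ℝ) : ℂ) := by push_cast; push_cast at h'; linear_combination h'
    simp [this]

open Polynomial in
/-- For every `U = x₁X₁+⋯+x₅X₅+xX+yY ∈ 𝔊₂`, the characteristic polynomial of `ad_U`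
is `T³(T−x)²(T−y)(T−x−y)`; in particular all complex eigenvalues of `ad_U` are real. -/
theorem charpoly_ad_G2 (u : Fin 7 → ℝ) :
    (adG2 u).charpoly =
      X ^ 3 * (X - C (u 5)) ^ 2 * (X - C (u 6)) * (X - C (u 5 + u 6)) ∧
    ∀ z : ℂ, Module.End.HasEigenvalue
        (Matrix.toLin' ((adG2 u).map (fun r : ℝ => (r : ℂ)))) z → z.im = 0 := by
  exact ⟨charpoly_adG2_eq u, eigen_real_of_charpoly u (adG2 u) (charpoly_adG2_eq u)⟩

end
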